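/- The resolving topological index of the Petersen graph is 5/3. Here the Petersen graph is the graph whose vertices are the 2-element subsets of {1,2,3,4,5}, with two vertices adjacent if and only if the corresponding subsets are disjoint. -/

import Mathlib

open Finset

variable {V : Type*} [Fintype V] [DecidableEq V]

/-- The resolving neighborhood `R(u,v)`: the set of vertices resolving the pair `(u,v)`. -/
noncomputable def resolvingNbhd (G : SimpleGraph V) (u v : V) : Finset V :=
  Finset.univ.filter fun x => G.dist u x ≠ G.dist v x

/-- The resolving share `r_w(u,v)` of a vertex `w` for the pair `(u,v)`. -/
noncomputable def rShare (G : SimpleGraph V) (w u v : V) : ℚ :=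
  if G.dist u w ≠ G.dist v w then 1 / (resolvingNbhd G u v).card else 0

/-- The resolvent neighborhood of `w`, as ordered pairs. Since `rShare` is symmetric
in the pair, averaging over ordered pairs agrees with averaging over unordered pairs. -/
noncomputable def resolventNbhd (G : SimpleGraph V) (w : V) : Finset (V × V) :=
  Finset.univ.filter fun p => p.1 ≠ p.2 ∧ G.dist p.1 w ≠ G.dist p.2 w

/-- The average resolving share `ar_w(G)` of `w` in `G`. -/
noncomputable def arShare (G : SimpleGraph V) (w : V) : ℚ :=
  (∑ p ∈ resolventNbhd G w, rShare G w p.1 p.2) / (resolventNbhd G w).card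

/-- The resolving topological index `𝓡(G)`. -/
noncomputable def rIndex (G : SimpleGraph V) : ℚ :=
  ∑ w : V, arShare G w

/-- The Petersen graph: vertices are the 2-element subsets of `{1,…,5}`, adjacent iff
disjoint. -/
def petersenGraph : SimpleGraph {s : Finset (Fin 5) // s.card = 2} where
  Adj a b := Disjoint a.1 b.1
  symm := ⟨fun _ _ h => h.symm⟩
  loopless := ⟨by
    intro a h
    try dsimp only at h
    have h2 := a.2
    rw [disjoint_self] at h
    rw [h] at h2
    simp at h2⟩

abbrev PV := {s : Finset (Fin 5) // s.card = 2}

def pdist (u v : PV) : ℕ := if u = v then 0 else if Disjoint u.1 v.1 then 1 else 2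

lemma common : ∀ u v : PV, u ≠ v → ¬ Disjoint u.1 v.1 →
    ∃ w : PV, Disjoint u.1 w.1 ∧ Disjoint w.1 v.1 := by decide

lemma dist_eq (u v : PV) : petersenGraph.dist u v = pdist u v := by
  unfold pdist
  split_ifs with h1 h2
  · subst h1; exact SimpleGraph.dist_self
  · exact (SimpleGraph.dist_eq_one_iff_adj).mpr h2
  · obtain ⟨w, hw1, hw2⟩ := common u v h1 h2
    have hle : petersenGraph.dist u v ≤ 2 := by
      have := SimpleGraph.dist_le ((SimpleGraph.Adj.toWalk (G := petersenGraph) (u := u) (v := w) hw1).append (SimpleGraph.Adj.toWalk hw2))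
      exact this
    have hr : petersenGraph.Reachable u v :=
      ⟨(SimpleGraph.Adj.toWalk (G := petersenGraph) (u := u) (v := w) hw1).append
        (SimpleGraph.Adj.toWalk hw2)⟩
    have h0 : petersenGraph.dist u v ≠ 0 := by
      intro h
      exact h1 (hr.dist_eq_zero_iff.mp h)
    have h1' : petersenGraph.dist u v ≠ 1 := by
      intro h
      exact h2 (SimpleGraph.dist_eq_one_iff_adj.mp h)
    omega

def resolvingNbhd' (u v : PV) : Finset PV := univ.filter fun x => pdist u x ≠ pdist v x
def rShare' (w u v : PV) : ℚ :=
  if pdist u w ≠ pdist v w then 1 / (resolvingNbhd' u v).card else 0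
def resolventNbhd' (w : PV) : Finset (PV × PV) :=
  univ.filter fun p => p.1 ≠ p.2 ∧ pdist p.1 w ≠ pdist p.2 w
def arShare' (w : PV) : ℚ :=
  (∑ p ∈ resolventNbhd' w, rShare' w p.1 p.2) / (resolventNbhd' w).card
def rIndex' : ℚ := ∑ w : PV, arShare' w


lemma rn_eq (u v : PV) : resolvingNbhd petersenGraph u v = resolvingNbhd' u v := by
  ext x; simp [resolvingNbhd, resolvingNbhd', dist_eq]

lemma rs_eq (w u v : PV) : rShare petersenGraph w u v = rShare' w u v := by
  rw [rShare, rShare', dist_eq, dist_eq, rn_eq]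

lemma rvn_eq (w : PV) : resolventNbhd petersenGraph w = resolventNbhd' w := by
  ext p; simp [resolventNbhd, resolventNbhd', dist_eq]

lemma idx_eq : rIndex petersenGraph = rIndex' := by
  unfold rIndex rIndex' arShare arShare'
  refine Finset.sum_congr rfl fun w _ => ?_
  rw [rvn_eq]
  congr 1
  exact Finset.sum_congr rfl fun p _ => rs_eq w p.1 p.2

lemma card_R : ∀ u v : PV, u ≠ v → (resolvingNbhd' u v).card = 6 := by decide

lemma card_res : ∀ w : PV, (resolventNbhd' w).card = 54 := by decide

lemma card_PV : Fintype.card PV = 10 := by decide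

lemma sum_eq (w : PV) : (∑ p ∈ resolventNbhd' w, rShare' w p.1 p.2) = 9 := by
  have h : ∀ p ∈ resolventNbhd' w, rShare' w p.1 p.2 = 1/6 := by
    intro p hp
    simp only [resolventNbhd', mem_filter] at hp
    rw [rShare', if_pos hp.2.2, card_R _ _ hp.2.1]
    norm_num
  rw [Finset.sum_congr rfl h, Finset.sum_const, card_res]
  norm_num

lemma ar_eq (w : PV) : arShare' w = 1/6 := by
  rw [arShare', sum_eq, card_res]
  norm_num

/-- The resolving topological index of the Petersen graph is `5/3`. -/
theorem rIndex_petersen : rIndex petersenGraph = 5 / 3 := by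
  rw [idx_eq, rIndex']
  simp only [ar_eq]
  rw [Finset.sum_const, Finset.card_univ, card_PV]
  norm_num
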